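/- arXiv:1003.2425 — 2 statements merged into one kernel-verified Lean document; each statement's English description precedes it below -/
import Mathlib

section
/- Suppose there exist four pairwise disjoint stationary subsets of ω₁. Then player II has a winning strategy in the game 𝒢. -/
noncomputable section

/-- The first uncountable ordinal. -/
def omega1 : Ordinal := (Cardinal.aleph 1).ord

/-- `C ⊆ ω₁` is club: unbounded in `ω₁` and closed (every limit `α < ω₁` with
`sup (C ∩ α) = α` belongs to `C`). -/
def IsClubOmega1 (C : Set Ordinal) : Prop :=
  C ⊆ Set.Iio omega1 ∧
  (∀ α < omega1, ∃ β ∈ C, α < β) ∧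
  (∀ α < omega1, Order.IsSuccLimit α → sSup (C ∩ Set.Iio α) = α → α ∈ C)

/-- `S ⊆ ω₁` is stationary: it meets every club subset of `ω₁`. -/
def IsStat (S : Set Ordinal) : Prop :=
  S ⊆ Set.Iio omega1 ∧ ∀ C, IsClubOmega1 C → (S ∩ C).Nonempty


/-- The restriction of `f : ω₁ → {0,1}` to the ordinals `≤ α`
(outside its domain the value is `0`). -/
noncomputable def restrictLE (f : Ordinal → Fin 2) (α : Ordinal) : Ordinal → Fin 2 :=
  fun ξ => if ξ ≤ α then f ξ else 0

/-- The restriction of `f : ω₁ → {0,1}` to the ordinals `< α`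
(outside its domain the value is `0`). -/
noncomputable def restrictLT (f : Ordinal → Fin 2) (α : Ordinal) : Ordinal → Fin 2 :=
  fun ξ => if ξ < α then f ξ else 0

/-- The run `(e, a)` of the game `𝒢` is played according to II's strategy `s`:
in round `α`, II's move `a α` is the value of `s` on `α`, I's moves through
round `α`, and II's moves before round `α`. -/
def PlayedByII (s : Ordinal → (Ordinal → Fin 2) → (Ordinal → Fin 2) → Fin 2)
    (e a : Ordinal → Fin 2) : Prop :=
  ∀ α < omega1, a α = s α (restrictLE e α) (restrictLT a α)

/-- Player II wins the run `(e, a)` of `𝒢`: with `E i = e⁻¹ {i}` and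
`A i = a⁻¹ {i}` (as subsets of `ω₁`), either `E 0 ∩ A 0` and `E 0 ∩ A 1` are
both stationary, or `E 1 ∩ A 0` and `E 1 ∩ A 1` are both stationary. -/
def IIWins (e a : Ordinal → Fin 2) : Prop :=
  (IsStat {α | α < omega1 ∧ e α = 0 ∧ a α = 0} ∧
    IsStat {α | α < omega1 ∧ e α = 0 ∧ a α = 1}) ∨
  (IsStat {α | α < omega1 ∧ e α = 1 ∧ a α = 0} ∧
    IsStat {α | α < omega1 ∧ e α = 1 ∧ a α = 1})

/-- `s` is a winning strategy for player II in `𝒢`. -/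
def IIWinning (s : Ordinal → (Ordinal → Fin 2) → (Ordinal → Fin 2) → Fin 2) : Prop :=
  ∀ e a, PlayedByII s e a → IIWins e a



lemma countable_sup_lt (f : ℕ → Ordinal.{0}) (hf : ∀ n, f n < omega1) : iSup f < omega1 := by
  apply Ordinal.iSup_lt_ord _ hf
  rw [omega1, Cardinal.isRegular_aleph_one.cof_eq]
  simpa using Cardinal.aleph0_lt_aleph_one

lemma club_inter_unbounded {C0 C1 : Set Ordinal.{0}} (h0 : IsClubOmega1 C0) (h1 : IsClubOmega1 C1)
    (α : Ordinal.{0}) (hα : α < omega1) : ∃ γ ∈ C0 ∩ C1, α < γ := by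
  -- choice functions
  have g0 : ∀ x : Ordinal.{0}, x < omega1 → {y // y ∈ C0 ∧ x < y} := fun x hx =>
    ⟨(h0.2.1 x hx).choose, (h0.2.1 x hx).choose_spec⟩
  have g1 : ∀ x : Ordinal.{0}, x < omega1 → {y // y ∈ C1 ∧ x < y} := fun x hx =>
    ⟨(h1.2.1 x hx).choose, (h1.2.1 x hx).choose_spec⟩
  -- a single step: from x < ω₁ get a pair (b, c) with x < b ∈ C0, b < c ∈ C1, c < ω₁
  -- build f : ℕ → Ordinal, f 0 = α, f (n+1) ∈ C1, with an intermediate C0 point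
  let step : {x : Ordinal.{0} // x < omega1} → {x : Ordinal.{0} // x < omega1} := fun x =>
    let b := g0 x.1 x.2
    let c := g1 b.1 (h0.1 b.2.1)
    ⟨c.1, h1.1 c.2.1⟩
  let F : ℕ → {x : Ordinal.{0} // x < omega1} := fun n => step^[n] ⟨α, hα⟩
  let f : ℕ → Ordinal.{0} := fun n => (F n).1
  have hfsucc : ∀ n, F (n + 1) = step (F n) := fun n => Function.iterate_succ_apply' step n _
  have hstep : ∀ x : {x : Ordinal.{0} // x < omega1},
      ∃ b, b ∈ C0 ∧ x.1 < b ∧ b < (step x).1 ∧ (step x).1 ∈ C1 := by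
    intro x
    exact ⟨(g0 x.1 x.2).1, (g0 x.1 x.2).2.1, (g0 x.1 x.2).2.2,
      (g1 (g0 x.1 x.2).1 (h0.1 (g0 x.1 x.2).2.1)).2.2,
      (g1 (g0 x.1 x.2).1 (h0.1 (g0 x.1 x.2).2.1)).2.1⟩
  have hmono : ∀ n, f n < f (n + 1) := by
    intro n
    obtain ⟨b, _, h1', h2', _⟩ := hstep (F n)
    have := hfsucc n
    simp only [f, this]
    exact h1'.trans h2'
  have hC1mem : ∀ n, f (n + 1) ∈ C1 := by
    intro n
    obtain ⟨b, _, _, _, hc⟩ := hstep (F n)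
    simp only [f, hfsucc n]; exact hc
  have hflt : ∀ n, f n < omega1 := fun n => (F n).2
  set γ := iSup f with hγdef
  have hγlt : γ < omega1 := countable_sup_lt f hflt
  have hle : ∀ n, f n ≤ γ := fun n => le_ciSup (Ordinal.bddAbove_range f) n
  have hlt : ∀ n, f n < γ := fun n => lt_of_lt_of_le (hmono n) (hle (n + 1))
  have hex : ∀ x < γ, ∃ n, x < f n := by
    intro x hx
    by_contra hc
    push_neg at hc
    exact absurd (ciSup_le hc) (not_le.2 hx)
  have hγlim : Order.IsSuccLimit γ := by
    refine Ordinal.isSuccLimit_iff.2 ⟨?_, Order.isSuccPrelimit_of_succ_lt fun δ hδ => ?_⟩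
    · intro h
      exact absurd (h ▸ hlt 0) (not_lt_zero (a := f 0))
    · obtain ⟨n, hn⟩ := hex δ hδ
      calc Order.succ δ ≤ f n := Order.succ_le_of_lt hn
        _ < γ := hlt n
  -- sSup of C ∩ Iio γ = γ given cofinal elements of C below γ
  have key : ∀ C : Set Ordinal.{0}, (∀ x < γ, ∃ y ∈ C, x < y ∧ y < γ) →
      sSup (C ∩ Set.Iio γ) = γ := by
    intro C hcof
    have hbdd : BddAbove (C ∩ Set.Iio γ) := ⟨γ, fun y hy => le_of_lt hy.2⟩
    obtain ⟨y0, hy0, _, hy0'⟩ := hcof 0 hγlim.pos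
    have hne : (C ∩ Set.Iio γ).Nonempty := ⟨y0, hy0, hy0'⟩
    refine le_antisymm (csSup_le hne fun y hy => le_of_lt hy.2) ?_
    by_contra hc
    push_neg at hc
    obtain ⟨y, hy, hy1, hy2⟩ := hcof _ hc
    exact absurd (le_csSup hbdd ⟨hy, hy2⟩) (not_le.2 hy1)
  have hγC1 : γ ∈ C1 := by
    apply h1.2.2 γ hγlt hγlim
    apply key
    intro x hx
    obtain ⟨n, hn⟩ := hex x hx
    exact ⟨f (n + 1), hC1mem n, hn.trans (hmono n), hlt (n + 1)⟩
  have hγC0 : γ ∈ C0 := by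
    apply h0.2.2 γ hγlt hγlim
    apply key
    intro x hx
    obtain ⟨n, hn⟩ := hex x hx
    obtain ⟨b, hb, h1', h2', _⟩ := hstep (F n)
    have hfe : f (n + 1) = (step (F n)).1 := by simp only [f, hfsucc n]
    have hb2 : b < f (n + 1) := by rw [hfe]; exact h2'
    exact ⟨b, hb, hn.trans h1', hb2.trans (hlt (n + 1))⟩
  have hαγ : α < γ := by
    obtain ⟨b, _, h1', h2', _⟩ := hstep (F 0)
    have : α < (step (F 0)).1 := h1'.trans h2'
    have hfe : f 1 = (step (F 0)).1 := by simp only [f, hfsucc 0]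
    calc α < f 1 := by rw [hfe]; exact this
      _ < γ := hlt 1
  exact ⟨γ, ⟨hγC0, hγC1⟩, hαγ⟩

lemma IsClubOmega1.inter {C0 C1 : Set Ordinal.{0}} (h0 : IsClubOmega1 C0) (h1 : IsClubOmega1 C1) :
    IsClubOmega1 (C0 ∩ C1) := by
  refine ⟨fun x hx => h0.1 hx.1, fun α hα => ?_, fun α hα hlim hsup => ?_⟩
  · obtain ⟨γ, hγ, hαγ⟩ := club_inter_unbounded h0 h1 α hα
    exact ⟨γ, hγ, hαγ⟩
  · have hne : ((C0 ∩ C1) ∩ Set.Iio α).Nonempty := by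
      rcases Set.eq_empty_or_nonempty ((C0 ∩ C1) ∩ Set.Iio α) with he | hne
      · rw [he, csSup_empty] at hsup
        exact absurd hsup.symm hlim.pos.ne'
      · exact hne
    have hmono : ∀ C : Set Ordinal.{0}, C0 ∩ C1 ⊆ C → sSup (C ∩ Set.Iio α) = α := by
      intro C hsub
      have hbdd : BddAbove (C ∩ Set.Iio α) := ⟨α, fun y hy => le_of_lt hy.2⟩
      have hne' : (C ∩ Set.Iio α).Nonempty := hne.mono (fun x hx => ⟨hsub hx.1, hx.2⟩)
      refine le_antisymm (csSup_le hne' fun y hy => le_of_lt hy.2) ?_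
      calc α = sSup ((C0 ∩ C1) ∩ Set.Iio α) := hsup.symm
        _ ≤ sSup (C ∩ Set.Iio α) :=
          csSup_le_csSup hbdd (hne) (fun x hx => ⟨hsub hx.1, hx.2⟩)
    exact ⟨h0.2.2 α hα hlim (hmono C0 Set.inter_subset_left),
      h1.2.2 α hα hlim (hmono C1 Set.inter_subset_right)⟩

lemma IsStat.mono {S T : Set Ordinal.{0}} (hS : IsStat S) (hsub : S ⊆ T)
    (hT : T ⊆ Set.Iio omega1) : IsStat T :=
  ⟨hT, fun C hC => (hS.2 C hC).mono (fun x hx => ⟨hsub hx.1, hx.2⟩)⟩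

lemma stat_split {S X Y : Set Ordinal.{0}} (hS : IsStat S) (hXY : S ⊆ X ∪ Y) :
    IsStat (S ∩ X) ∨ IsStat (S ∩ Y) := by
  by_contra hc
  push_neg at hc
  obtain ⟨hx, hy⟩ := hc
  have hsubX : S ∩ X ⊆ Set.Iio omega1 := fun a ha => hS.1 ha.1
  have hsubY : S ∩ Y ⊆ Set.Iio omega1 := fun a ha => hS.1 ha.1
  rw [IsStat, not_and] at hx hy
  push_neg at hx hy
  obtain ⟨CX, hCX, hCX'⟩ := hx hsubX
  obtain ⟨CY, hCY, hCY'⟩ := hy hsubY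
  obtain ⟨a, haS, haC⟩ := hS.2 _ (hCX.inter hCY)
  rcases hXY haS with hX | hY
  · have h : a ∈ S ∩ X ∩ CX := ⟨⟨haS, hX⟩, haC.1⟩
    rw [hCX'] at h; exact Set.notMem_empty a h
  · have h : a ∈ S ∩ Y ∩ CY := ⟨⟨haS, hY⟩, haC.2⟩
    rw [hCY'] at h; exact Set.notMem_empty a h

/-- If there exist four pairwise disjoint stationary subsets of `ω₁`, then
player II has a winning strategy in the game `𝒢`. -/
theorem II_has_winning_strategy_in_G
    (h : ∃ B : Fin 2 → Fin 2 → Set Ordinal.{0},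
      (∀ i j, IsStat (B i j)) ∧
      (∀ i j i' j', (i, j) ≠ (i', j') → Disjoint (B i j) (B i' j'))) :
    ∃ s : Ordinal.{0} → (Ordinal.{0} → Fin 2) → (Ordinal.{0} → Fin 2) → Fin 2,
      IIWinning s := by
  classical
  obtain ⟨B, hstat, hdisj⟩ := h
  refine ⟨fun α e' _ => if α ∈ B 0 0 then e' α else if α ∈ B 0 1 then 1 - e' α
    else if α ∈ B 1 0 then 0 else if α ∈ B 1 1 then 1 else 0, ?_⟩
  intro e a hplay
  have key : ∀ α < omega1, a α = (if α ∈ B 0 0 then e α else if α ∈ B 0 1 then 1 - e α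
      else if α ∈ B 1 0 then 0 else if α ∈ B 1 1 then 1 else 0) := by
    intro α hα
    rw [hplay α hα]
    simp only [restrictLE, le_refl, if_pos]
  have hnm : ∀ (i j i' j' : Fin 2), (i, j) ≠ (i', j') → ∀ α ∈ B i j, α ∉ B i' j' :=
    fun i j i' j' hne α hm => Set.disjoint_left.mp (hdisj i j i' j' hne) hm
  have mv1 : ∀ α ∈ B 0 0, a α = e α := by
    intro α hm
    rw [key α ((hstat 0 0).1 hm), if_pos hm]
  have mv2 : ∀ α ∈ B 0 1, a α = 1 - e α := by
    intro α hm
    rw [key α ((hstat 0 1).1 hm), if_neg (hnm 0 1 0 0 (by decide) α hm), if_pos hm]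
  have mv3 : ∀ α ∈ B 1 0, a α = 0 := by
    intro α hm
    rw [key α ((hstat 1 0).1 hm), if_neg (hnm 1 0 0 0 (by decide) α hm),
      if_neg (hnm 1 0 0 1 (by decide) α hm), if_pos hm]
  have mv4 : ∀ α ∈ B 1 1, a α = 1 := by
    intro α hm
    rw [key α ((hstat 1 1).1 hm), if_neg (hnm 1 1 0 0 (by decide) α hm),
      if_neg (hnm 1 1 0 1 (by decide) α hm), if_neg (hnm 1 1 1 0 (by decide) α hm),
      if_pos hm]
  set E : Fin 2 → Set Ordinal.{0} := fun i => {α | e α = i} with hE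
  set W : Fin 2 → Fin 2 → Set Ordinal.{0} :=
    fun i j => {α | α < omega1 ∧ e α = i ∧ a α = j} with hWdef
  have hWsub : ∀ i j, W i j ⊆ Set.Iio omega1 := fun i j α hα => hα.1
  have htwo : ∀ x : Fin 2, x = 0 ∨ x = 1 := by decide
  have hsplit : ∀ i j, IsStat (B i j ∩ E 0) ∨ IsStat (B i j ∩ E 1) := by
    intro i j
    exact stat_split (hstat i j) (fun α _ => (htwo (e α)).imp (fun h => h) (fun h => h))
  have m1 : ∀ k, IsStat (B 0 0 ∩ E k) → IsStat (W k k) := by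
    intro k hst
    exact hst.mono (fun α hα => ⟨(hstat 0 0).1 hα.1, hα.2, by rw [mv1 α hα.1]; exact hα.2⟩)
      (hWsub k k)
  have m2 : ∀ k, IsStat (B 0 1 ∩ E k) → IsStat (W k (1 - k)) := by
    intro k hst
    exact hst.mono (fun α hα => ⟨(hstat 0 1).1 hα.1, hα.2, by rw [mv2 α hα.1, hα.2]⟩)
      (hWsub k (1 - k))
  have m3 : ∀ k, IsStat (B 1 0 ∩ E k) → IsStat (W k 0) := by
    intro k hst
    exact hst.mono (fun α hα => ⟨(hstat 1 0).1 hα.1, hα.2, mv3 α hα.1⟩) (hWsub k 0)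
  have m4 : ∀ k, IsStat (B 1 1 ∩ E k) → IsStat (W k 1) := by
    intro k hst
    exact hst.mono (fun α hα => ⟨(hstat 1 1).1 hα.1, hα.2, mv4 α hα.1⟩) (hWsub k 1)
  show (IsStat (W 0 0) ∧ IsStat (W 0 1)) ∨ (IsStat (W 1 0) ∧ IsStat (W 1 1))
  rcases hsplit 0 0 with h1 | h1 <;> rcases hsplit 0 1 with h2 | h2 <;>
    rcases hsplit 1 0 with h3 | h3 <;> rcases hsplit 1 1 with h4 | h4 <;>
    first
      | exact Or.inl ⟨m1 0 h1, m2 0 h2⟩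
      | exact Or.inl ⟨m1 0 h1, m4 0 h4⟩
      | exact Or.inl ⟨m3 0 h3, m2 0 h2⟩
      | exact Or.inl ⟨m3 0 h3, m4 0 h4⟩
      | exact Or.inr ⟨m2 1 h2, m1 1 h1⟩
      | exact Or.inr ⟨m2 1 h2, m4 1 h4⟩
      | exact Or.inr ⟨m3 1 h3, m1 1 h1⟩
      | exact Or.inr ⟨m3 1 h3, m4 1 h4⟩

end
end

section
/- If the principle C_s holds, then Unsplit has no winning strategy in the stationary set splitting game SG. -/
noncomputable section

/-- A run of the stationary set splitting game `SG`, coded by a pair of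
disjoint subsets `A, B` of `ω₁` (the accepted set is `E = A ∪ B`). -/
def SGRun (A B : Set Ordinal) : Prop :=
  A ⊆ Set.Iio omega1 ∧ B ⊆ Set.Iio omega1 ∧ Disjoint A B

/-- Split wins the run `(A, B)` if `A ∪ B` is nonstationary or both `A` and `B`
are stationary. -/
def SplitWins (A B : Set Ordinal) : Prop :=
  ¬ IsStat (A ∪ B) ∨ (IsStat A ∧ IsStat B)

/-- The run `(A, B)` is played according to Split's strategy `τ`
(`true` = put into `A`): for every accepted `α`, `α ∈ A` iff `τ` says so on the
position `(A ∩ α, B ∩ α)`. -/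
def PlayedBySplit (τ : Ordinal → Set Ordinal → Set Ordinal → Bool)
    (A B : Set Ordinal) : Prop :=
  ∀ α ∈ A ∪ B, (α ∈ A ↔ τ α (A ∩ Set.Iio α) (B ∩ Set.Iio α) = true)

/-- `τ` is a winning strategy for Split. -/
def SplitWinning (τ : Ordinal → Set Ordinal → Set Ordinal → Bool) : Prop :=
  ∀ A B, SGRun A B → PlayedBySplit τ A B → SplitWins A B

/-- The run `(A, B)` is played according to Unsplit's strategy `υ`
(`true` = accept): for every `α < ω₁`, `α` is accepted iff `υ` says so on the
position `(A ∩ α, B ∩ α)`. -/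
def PlayedByUnsplit (υ : Ordinal → Set Ordinal → Set Ordinal → Bool)
    (A B : Set Ordinal) : Prop :=
  ∀ α < omega1, (α ∈ A ∪ B ↔ υ α (A ∩ Set.Iio α) (B ∩ Set.Iio α) = true)

/-- `υ` is a winning strategy for Unsplit. -/
def UnsplitWinning (υ : Ordinal → Set Ordinal → Set Ordinal → Bool) : Prop :=
  ∀ A B, SGRun A B → PlayedByUnsplit υ A B → ¬ SplitWins A B

/-- A set of ordinals has order type `ω`. -/
def OTypeOmega (s : Set Ordinal) : Prop :=
  Ordinal.type ((· < ·) : s → s → Prop) = Ordinal.omega0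

/-- The family `⟨a α β : β < γ α⟩` (for `α < ω₁` limit) witnesses `C_s`:
each `a α β` is a cofinal subset of `α` of order type `ω`; the family is
`⊆`-decreasing mod finite in `β`; and for every club `C` and stationary `E`
some `a α β` with `α ∈ E` has `a α β \ C` finite and `a α β ∩ E` infinite. -/
def CsWitness (γ : Ordinal → Ordinal) (a : Ordinal → Ordinal → Set Ordinal) : Prop :=
  (∀ α, α < omega1 → Order.IsSuccLimit α →
    γ α < omega1 ∧
    ∀ β < γ α, a α β ⊆ Set.Iio α ∧ (∀ ξ < α, ∃ η ∈ a α β, ξ < η) ∧ OTypeOmega (a α β)) ∧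
  (∀ α, α < omega1 → Order.IsSuccLimit α → ∀ β β', β < β' → β' < γ α → (a α β' \ a α β).Finite) ∧
  (∀ C E : Set Ordinal, IsClubOmega1 C → IsStat E →
    ∃ α β, α < omega1 ∧ Order.IsSuccLimit α ∧ α ∈ E ∧ β < γ α ∧
      (a α β \ C).Finite ∧ (a α β ∩ E).Infinite)

/-- The principle `C_s`. -/
def Cs : Prop :=
  ∃ (γ : Ordinal.{0} → Ordinal.{0}) (a : Ordinal.{0} → Ordinal.{0} → Set Ordinal.{0}), CsWitness γ a

/-- The sequence `⟨σ α : α < ω₁⟩` witnesses `D_u`: it is a `◊`-sequence, and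
for every `E ⊆ ω₁` there is a club `C` such that either every `α ∈ C` guessing
`E` lies in `E`, or every `α ∈ C` guessing `E` lies outside `E`. -/
def DuWitness (σ : Ordinal → Set Ordinal) : Prop :=
  (∀ α < omega1, σ α ⊆ Set.Iio α) ∧
  (∀ A : Set Ordinal, A ⊆ Set.Iio omega1 →
    IsStat {α | α < omega1 ∧ A ∩ Set.Iio α = σ α}) ∧
  (∀ E : Set Ordinal, E ⊆ Set.Iio omega1 →
    ∃ C, IsClubOmega1 C ∧
      ((∀ α ∈ C, E ∩ Set.Iio α = σ α → α ∈ E) ∨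
       (∀ α ∈ C, E ∩ Set.Iio α = σ α → α ∉ E)))

/-- The principle `D_u`. -/
def Du : Prop := ∃ σ : Ordinal.{0} → Set Ordinal.{0}, DuWitness σ

/-! ### Auxiliary material for the proof -/

private lemma iSup_nat_lt_omega1 {f : ℕ → Ordinal.{0}} (hf : ∀ n, f n < omega1) :
    (⨆ n, f n) < omega1 := by
  have hf' : ∀ n : ℕ, f n < (Cardinal.aleph 1).ord := hf
  have : (⨆ n, f n) < (Cardinal.aleph 1).ord :=
    Cardinal.iSup_lt_ord_of_isRegular (f := f) Cardinal.isRegular_aleph_one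
      (by rw [Cardinal.mk_nat]; exact Cardinal.aleph0_lt_aleph_one) hf'
  exact this

/-- The intersection of two clubs is a club. -/
private lemma isClub_inter {C D : Set Ordinal.{0}} (hC : IsClubOmega1 C) (hD : IsClubOmega1 D) :
    IsClubOmega1 (C ∩ D) := by
  classical
  obtain ⟨hCsub, hCunb, hCcl⟩ := hC
  obtain ⟨hDsub, hDunb, hDcl⟩ := hD
  refine ⟨fun x hx => hCsub hx.1, ?_, ?_⟩
  · intro α hα
    -- "next element" functions for `C` and `D`
    have hnC : ∀ x, ∃ y, x < omega1 → (y ∈ C ∧ x < y ∧ y < omega1) := by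
      intro x
      by_cases hx : x < omega1
      · obtain ⟨y, hy, hxy⟩ := hCunb x hx
        exact ⟨y, fun _ => ⟨hy, hxy, hCsub hy⟩⟩
      · exact ⟨0, fun hx' => absurd hx' hx⟩
    have hnD : ∀ x, ∃ y, x < omega1 → (y ∈ D ∧ x < y ∧ y < omega1) := by
      intro x
      by_cases hx : x < omega1
      · obtain ⟨y, hy, hxy⟩ := hDunb x hx
        exact ⟨y, fun _ => ⟨hy, hxy, hDsub hy⟩⟩
      · exact ⟨0, fun hx' => absurd hx' hx⟩
    choose nC hnC using hnC
    choose nD hnD using hnD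
    -- the alternating sequence
    let f : ℕ → Ordinal := fun n => Nat.rec (nC α) (fun _ ih => nC (nD ih)) n
    have hf0 : f 0 = nC α := rfl
    have hfs : ∀ n, f (n + 1) = nC (nD (f n)) := fun n => rfl
    have hfC : ∀ n, f n ∈ C ∧ f n < omega1 := by
      intro n
      induction n with
      | zero => exact ⟨(hnC α hα).1, (hnC α hα).2.2⟩
      | succ n ih =>
        have h1 := hnD (f n) ih.2
        have h2 := hnC (nD (f n)) h1.2.2
        exact ⟨h2.1, h2.2.2⟩
    have hfD : ∀ n, nD (f n) ∈ D ∧ f n < nD (f n) ∧ nD (f n) < omega1 :=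
      fun n => hnD (f n) (hfC n).2
    have hmono : ∀ n, f n < f (n + 1) := by
      intro n
      have h1 := hfD n
      have h2 := hnC (nD (f n)) h1.2.2
      exact lt_trans h1.2.1 h2.2.1
    set δ : Ordinal := ⨆ n, f n with hδdef
    have hδ : δ < omega1 := iSup_nat_lt_omega1 (fun n => (hfC n).2)
    have hle : ∀ n, f n ≤ δ := Ordinal.le_iSup f
    have hltδ : ∀ n, f n < δ := fun n => lt_of_lt_of_le (hmono n) (hle (n + 1))
    have hstep : ∀ n, nD (f n) < f (n + 1) :=
      fun n => (hnC (nD (f n)) (hfD n).2.2).2.1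
    have hdltδ : ∀ n, nD (f n) < δ := fun n => lt_of_lt_of_le (hstep n) (hle (n + 1))
    have hδlim : Order.IsSuccLimit δ := by
      refine Ordinal.isSuccLimit_iff.mpr ⟨?_, Order.isSuccPrelimit_of_succ_lt ?_⟩
      · exact (lt_of_le_of_lt (zero_le (a := f 0)) (hltδ 0)).ne'
      · intro x hx
        obtain ⟨n, hn⟩ := Ordinal.lt_iSup_iff.mp hx
        exact lt_of_le_of_lt (Order.succ_le_of_lt hn) (lt_of_lt_of_le (hmono n) (hle (n + 1)))
    have hbdd : BddAbove (C ∩ Set.Iio δ) := ⟨δ, fun x hx => hx.2.le⟩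
    have hbddD : BddAbove (D ∩ Set.Iio δ) := ⟨δ, fun x hx => hx.2.le⟩
    have hCsup : sSup (C ∩ Set.Iio δ) = δ := by
      apply le_antisymm
      · exact csSup_le ⟨f 0, (hfC 0).1, hltδ 0⟩ (fun x hx => hx.2.le)
      · refine Ordinal.iSup_le (fun n => ?_)
        exact le_csSup hbdd ⟨(hfC n).1, hltδ n⟩
    have hDsup : sSup (D ∩ Set.Iio δ) = δ := by
      apply le_antisymm
      · exact csSup_le ⟨nD (f 0), (hfD 0).1, hdltδ 0⟩ (fun x hx => hx.2.le)
      · refine Ordinal.iSup_le (fun n => ?_)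
        exact le_trans (hfD n).2.1.le (le_csSup hbddD ⟨(hfD n).1, hdltδ n⟩)
    have hδC : δ ∈ C := hCcl δ hδ hδlim hCsup
    have hδD : δ ∈ D := hDcl δ hδ hδlim hDsup
    exact ⟨δ, ⟨hδC, hδD⟩, lt_of_lt_of_le (hnC α hα).2.1 (hle 0)⟩
  · intro α hα hlim hsup
    have hne : (C ∩ D ∩ Set.Iio α).Nonempty := by
      rcases Set.eq_empty_or_nonempty (C ∩ D ∩ Set.Iio α) with he | hne
      · rw [he, csSup_empty] at hsup
        exact absurd (by simpa using hsup.symm) hlim.ne_bot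
      · exact hne
    have hsubC : C ∩ D ∩ Set.Iio α ⊆ C ∩ Set.Iio α := fun x hx => ⟨hx.1.1, hx.2⟩
    have hsubD : C ∩ D ∩ Set.Iio α ⊆ D ∩ Set.Iio α := fun x hx => ⟨hx.1.2, hx.2⟩
    have hCa : sSup (C ∩ Set.Iio α) = α := by
      apply le_antisymm
      · exact csSup_le (hne.mono hsubC) (fun x hx => hx.2.le)
      · calc α = sSup (C ∩ D ∩ Set.Iio α) := hsup.symm
          _ ≤ sSup (C ∩ Set.Iio α) :=
            csSup_le_csSup ⟨α, fun x hx => hx.2.le⟩ hne hsubC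
    have hDa : sSup (D ∩ Set.Iio α) = α := by
      apply le_antisymm
      · exact csSup_le (hne.mono hsubD) (fun x hx => hx.2.le)
      · calc α = sSup (C ∩ D ∩ Set.Iio α) := hsup.symm
          _ ≤ sSup (D ∩ Set.Iio α) :=
            csSup_le_csSup ⟨α, fun x hx => hx.2.le⟩ hne hsubD
    exact ⟨hCcl α hα hlim hCa, hDcl α hα hlim hDa⟩

-- The step function of the run against Unsplit's strategy: Split puts an
-- accepted limit ordinal `α` into `B` iff for every `β < γ α`, infinitely many
-- elements of `a α β` in `B` so far forces infinitely many in `A` so far.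
open Classical in
private noncomputable def sgStep (υ : Ordinal.{0} → Set Ordinal.{0} → Set Ordinal.{0} → Bool)
    (γ : Ordinal.{0} → Ordinal.{0}) (a : Ordinal.{0} → Ordinal.{0} → Set Ordinal.{0})
    (α : Ordinal.{0}) (rec : ∀ ξ, ξ < α → ℕ) : ℕ :=
  let A' : Set Ordinal := {ξ | ∃ h : ξ < α, rec ξ h = 1}
  let B' : Set Ordinal := {ξ | ∃ h : ξ < α, rec ξ h = 2}
  if υ α A' B' = true then
    (if Order.IsSuccLimit α ∧ ∀ β < γ α, (a α β ∩ B').Infinite → (a α β ∩ A').Infinite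
      then 2 else 1)
  else 0

private noncomputable def sgRun (υ : Ordinal.{0} → Set Ordinal.{0} → Set Ordinal.{0} → Bool)
    (γ : Ordinal.{0} → Ordinal.{0}) (a : Ordinal.{0} → Ordinal.{0} → Set Ordinal.{0}) :
    Ordinal.{0} → ℕ :=
  Ordinal.lt_wf.fix (sgStep υ γ a)

private lemma sgRun_eq (υ : Ordinal.{0} → Set Ordinal.{0} → Set Ordinal.{0} → Bool)
    (γ : Ordinal.{0} → Ordinal.{0}) (a : Ordinal.{0} → Ordinal.{0} → Set Ordinal.{0})
    (α : Ordinal.{0}) :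
    sgRun υ γ a α = sgStep υ γ a α (fun ξ _ => sgRun υ γ a ξ) :=
  WellFounded.fix_eq _ _ _

/-- If the principle `C_s` holds, then Unsplit has no winning strategy in the
stationary set splitting game `SG`. -/
theorem cs_implies_unsplit_has_no_winning_strategy (h : Cs) :
    ¬ ∃ υ : Ordinal.{0} → Set Ordinal.{0} → Set Ordinal.{0} → Bool, UnsplitWinning υ := by
  classical
  rintro ⟨υ, hw⟩
  obtain ⟨γ, a, h1, h2, h3⟩ := h
  set g : Ordinal → ℕ := sgRun υ γ a with hgdef
  set A : Set Ordinal := {ξ | ξ < omega1 ∧ g ξ = 1} with hAdef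
  set B : Set Ordinal := {ξ | ξ < omega1 ∧ g ξ = 2} with hBdef
  -- the one-step unfolding of the run, with the position sets rewritten
  have key : ∀ α < omega1, g α =
      if υ α (A ∩ Set.Iio α) (B ∩ Set.Iio α) = true then
        (if Order.IsSuccLimit α ∧ ∀ β < γ α,
            (a α β ∩ (B ∩ Set.Iio α)).Infinite → (a α β ∩ (A ∩ Set.Iio α)).Infinite
          then 2 else 1)
      else 0 := by
    intro α hα
    have hA' : {ξ | ∃ _ : ξ < α, g ξ = 1} = A ∩ Set.Iio α := by
      ext ξ
      simp only [Set.mem_setOf_eq, Set.mem_inter_iff, Set.mem_Iio, hAdef, exists_prop]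
      exact ⟨fun ⟨h1', h2'⟩ => ⟨⟨lt_trans h1' hα, h2'⟩, h1'⟩,
        fun ⟨⟨_, h2'⟩, h1'⟩ => ⟨h1', h2'⟩⟩
    have hB' : {ξ | ∃ _ : ξ < α, g ξ = 2} = B ∩ Set.Iio α := by
      ext ξ
      simp only [Set.mem_setOf_eq, Set.mem_inter_iff, Set.mem_Iio, hBdef, exists_prop]
      exact ⟨fun ⟨h1', h2'⟩ => ⟨⟨lt_trans h1' hα, h2'⟩, h1'⟩,
        fun ⟨⟨_, h2'⟩, h1'⟩ => ⟨h1', h2'⟩⟩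
    have := sgRun_eq υ γ a α
    rw [sgStep] at this
    simp only [← hgdef] at this
    rw [this, hA', hB']
  have hAB : ∀ x, ¬(x ∈ A ∧ x ∈ B) := by
    rintro x ⟨hx1, hx2⟩
    have := hx1.2.symm.trans hx2.2
    omega
  have hrun : SGRun A B :=
    ⟨fun x hx => hx.1, fun x hx => hx.1,
      Set.disjoint_left.mpr (fun x hx hx' => hAB x ⟨hx, hx'⟩)⟩
  have hplayed : PlayedByUnsplit υ A B := by
    intro α hα
    constructor
    · intro hmem
      by_contra hu
      have hu' : υ α (A ∩ Set.Iio α) (B ∩ Set.Iio α) = false := by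
        cases hv : υ α (A ∩ Set.Iio α) (B ∩ Set.Iio α)
        · rfl
        · exact absurd hv hu
      have h0 : g α = 0 := by
        rw [key α hα, hu']
        simp
      rcases hmem with hmem | hmem
      · rw [hmem.2] at h0; omega
      · rw [hmem.2] at h0; omega
    · intro hu
      by_cases hr : Order.IsSuccLimit α ∧ ∀ β < γ α,
          (a α β ∩ (B ∩ Set.Iio α)).Infinite → (a α β ∩ (A ∩ Set.Iio α)).Infinite
      · exact Or.inr ⟨hα, by rw [key α hα, if_pos hu, if_pos hr]⟩
      · exact Or.inl ⟨hα, by rw [key α hα, if_pos hu, if_neg hr]⟩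
  have hout := hw A B hrun hplayed
  simp only [SplitWins, not_or, not_not, not_and] at hout
  obtain ⟨hE, hnotboth⟩ := hout
  -- rule facts
  have ruleA : ∀ α, α < omega1 → α ∈ A → Order.IsSuccLimit α →
      ∃ β, β < γ α ∧ (a α β ∩ (B ∩ Set.Iio α)).Infinite ∧
        ¬(a α β ∩ (A ∩ Set.Iio α)).Infinite := by
    intro α hα hαA hlim
    have hg1 : g α = 1 := hαA.2
    rw [key α hα] at hg1
    by_cases hu : υ α (A ∩ Set.Iio α) (B ∩ Set.Iio α) = true
    · rw [if_pos hu] at hg1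
      by_cases hr : Order.IsSuccLimit α ∧ ∀ β < γ α,
          (a α β ∩ (B ∩ Set.Iio α)).Infinite → (a α β ∩ (A ∩ Set.Iio α)).Infinite
      · rw [if_pos hr] at hg1; omega
      · push_neg at hr
        obtain ⟨β, hβ, hBi, hAi⟩ := hr hlim
        exact ⟨β, hβ, hBi, Set.not_infinite.mpr hAi⟩
    · rw [if_neg hu] at hg1; omega
  have ruleB : ∀ α, α < omega1 → α ∈ B →
      ∀ β < γ α, (a α β ∩ (B ∩ Set.Iio α)).Infinite →
        (a α β ∩ (A ∩ Set.Iio α)).Infinite := by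
    intro α hα hαB
    have hg2 : g α = 2 := hαB.2
    rw [key α hα] at hg2
    by_cases hu : υ α (A ∩ Set.Iio α) (B ∩ Set.Iio α) = true
    · rw [if_pos hu] at hg2
      by_cases hr : Order.IsSuccLimit α ∧ ∀ β < γ α,
          (a α β ∩ (B ∩ Set.Iio α)).Infinite → (a α β ∩ (A ∩ Set.Iio α)).Infinite
      · exact hr.2
      · rw [if_neg hr] at hg2; omega
    · rw [if_neg hu] at hg2; omega
  -- restricting intersections below `α`
  have hres : ∀ α β (X : Set Ordinal), α < omega1 → Order.IsSuccLimit α → β < γ α →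
      a α β ∩ (X ∩ Set.Iio α) = a α β ∩ X := by
    intro α β X hα hlim hβ
    have hsub : a α β ⊆ Set.Iio α := ((h1 α hα hlim).2 β hβ).1
    ext x
    exact ⟨fun ⟨u, v, _⟩ => ⟨u, v⟩, fun ⟨u, v⟩ => ⟨u, v, hsub u⟩⟩
  by_cases hAstat : IsStat A
  · -- Case 1: `A` stationary, hence `B` nonstationary
    have hBn : ¬ IsStat B := hnotboth hAstat
    simp only [IsStat, not_and, not_forall] at hBn
    obtain ⟨C₀, hC₀, hBC₀⟩ := hBn (fun x hx => hx.1)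
    have hBC₀' : B ∩ C₀ = ∅ := Set.not_nonempty_iff_eq_empty.mp hBC₀
    obtain ⟨α, β', hα, hlim, hαA, hβ', hfin, hinf⟩ := h3 C₀ A hC₀ hAstat
    obtain ⟨β, hβ, hBi, hAi⟩ := ruleA α hα hαA hlim
    rw [hres α β B hα hlim hβ] at hBi
    rw [hres α β A hα hlim hβ] at hAi
    have hAfin : (a α β ∩ A).Finite := Set.not_infinite.mp hAi
    -- `a α β' ∩ B` is finite since `a α β' ⊆* C₀` and `B ∩ C₀ = ∅`
    have hBfin' : (a α β' ∩ B).Finite := by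
      refine hfin.subset (fun x hx => ⟨hx.1, fun hxC => ?_⟩)
      have : x ∈ B ∩ C₀ := ⟨hx.2, hxC⟩
      rw [hBC₀'] at this
      exact this
    rcases lt_trichotomy β β' with hlt | heq | hgt
    · -- then `a α β ∩ A` ⊇ almost all of `a α β' ∩ A`, hence infinite
      have hdf : (a α β' \ a α β).Finite := h2 α hα hlim β β' hlt hβ'
      have : ((a α β' ∩ A) \ (a α β' \ a α β)).Infinite := hinf.diff hdf
      refine (hAi (this.mono ?_)).elim
      rintro x ⟨⟨hxa', hxA⟩, hnd⟩
      refine ⟨?_, hxA⟩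
      by_contra hxb
      exact hnd ⟨hxa', hxb⟩
    · rw [heq] at hBi
      exact hBi hBfin'
    · have hdf : (a α β \ a α β').Finite := h2 α hα hlim β' β hgt hβ
      have hsub : a α β ∩ B ⊆ (a α β \ a α β') ∪ (a α β' ∩ B) := by
        rintro x ⟨hxa, hxB⟩
        by_cases hx' : x ∈ a α β'
        · exact Or.inr ⟨hx', hxB⟩
        · exact Or.inl ⟨hxa, hx'⟩
      exact hBi ((hdf.union hBfin').subset hsub)
  · -- Case 2: `A` nonstationary, hence `B` stationary
    simp only [IsStat, not_and, not_forall] at hAstat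
    obtain ⟨C₀, hC₀, hAC₀⟩ := hAstat (fun x hx => hx.1)
    have hAC₀' : A ∩ C₀ = ∅ := Set.not_nonempty_iff_eq_empty.mp hAC₀
    have hBstat : IsStat B := by
      refine ⟨fun x hx => hx.1, fun C hC => ?_⟩
      obtain ⟨x, hxE, hxC, hxC₀⟩ := hE.2 (C ∩ C₀) (isClub_inter hC hC₀)
      rcases hxE with hxA | hxB
      · exact absurd (show x ∈ A ∩ C₀ from ⟨hxA, hxC₀⟩) (by rw [hAC₀']; exact id)
      · exact ⟨x, hxB, hxC⟩
    obtain ⟨α, β', hα, hlim, hαB, hβ', hfin, hinf⟩ := h3 C₀ B hC₀ hBstat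
    have hBi : (a α β' ∩ (B ∩ Set.Iio α)).Infinite := by
      rw [hres α β' B hα hlim hβ']; exact hinf
    have hAi := ruleB α hα hαB β' hβ' hBi
    rw [hres α β' A hα hlim hβ'] at hAi
    have hAfin : (a α β' ∩ A).Finite := by
      refine hfin.subset (fun x hx => ⟨hx.1, fun hxC => ?_⟩)
      have : x ∈ A ∩ C₀ := ⟨hx.2, hxC⟩
      rw [hAC₀'] at this
      exact this
    exact hAi hAfin

end
end
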